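/- Let τ > 0, let A be an n×n real matrix such that I − τA is invertible, set B := (I − τA)⁻¹, let Q and C be n×n real matrices, and define K_c(s) := exp(sA)·C + exp(sA)·(∫_{u=0}^{s} e^{−u/τ}·exp(−uA) du)·Q·Bᵀ. Then K_c is twice differentiable and its derivatives at 0 encode the linear dynamics via the identity τ·K_c″(0) + K_c′(0) = A·(τ·K_c′(0) + C); consequently, if the matrix τ·K_c′(0) + C is invertible, then A = (τ·K_c″(0) + K_c′(0))·(τ·K_c′(0) + C)⁻¹. -/

import Mathlib

open Matrix NormedSpace
open scoped Matrix.Norms.L2Operator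

/-- The correlation function `K_c(s)` of the stationary colored-noise-driven linear system,
with noise-memory matrix `B = (I − τA)⁻¹` (Eq. (8) of the paper). -/
noncomputable def coloredCorrelation (n : ℕ) (τ : ℝ) (A Q C : Matrix (Fin n) (Fin n) ℝ)
    (s : ℝ) : Matrix (Fin n) (Fin n) ℝ :=
  exp (s • A) * C +
    exp (s • A) * (∫ u in (0:ℝ)..s, Real.exp (-u/τ) • exp ((-u) • A)) * Q *
      ((1 - τ • A)⁻¹)ᵀ

namespace ColoredAux

variable {n : ℕ}

noncomputable def g (A : Matrix (Fin n) (Fin n) ℝ) (s : ℝ) : Matrix (Fin n) (Fin n) ℝ :=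
  exp (s • A)

noncomputable def phi (τ : ℝ) (A : Matrix (Fin n) (Fin n) ℝ) (u : ℝ) :
    Matrix (Fin n) (Fin n) ℝ :=
  Real.exp (-u/τ) • exp ((-u) • A)

noncomputable def Fi (τ : ℝ) (A : Matrix (Fin n) (Fin n) ℝ) (s : ℝ) :
    Matrix (Fin n) (Fin n) ℝ :=
  ∫ u in (0:ℝ)..s, phi τ A u

lemma hasDerivAt_g (A : Matrix (Fin n) (Fin n) ℝ) (s : ℝ) :
    HasDerivAt (g A) (g A s * A) s :=
  hasDerivAt_exp_smul_const A s

lemma phi_cont (τ : ℝ) (A : Matrix (Fin n) (Fin n) ℝ) : Continuous (phi τ A) := by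
  show Continuous ((fun u : ℝ => Real.exp (-u/τ)) • (fun u : ℝ => exp ((-u) • A)))
  apply Continuous.smul
  · exact Real.continuous_exp.comp (by fun_prop)
  · exact continuous_iff_continuousAt.2 fun u => (exp_analytic (𝕂 := ℝ) _).continuousAt.comp (continuous_neg.smul continuous_const).continuousAt

lemma hasDerivAt_Fi (τ : ℝ) (A : Matrix (Fin n) (Fin n) ℝ) (s : ℝ) :
    HasDerivAt (Fi τ A) (phi τ A s) s :=
  ((phi_cont τ A).integral_hasStrictDerivAt 0 s).hasDerivAt

noncomputable def P (τ : ℝ) (A : Matrix (Fin n) (Fin n) ℝ) (s : ℝ) :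
    Matrix (Fin n) (Fin n) ℝ :=
  Real.exp (-s/τ) • ((-1 : ℝ) • (exp ((-s) • A) * A)) +
    (Real.exp (-s/τ) * (-1/τ)) • exp ((-s) • A)

lemma hasDerivAt_phi (τ : ℝ) (A : Matrix (Fin n) (Fin n) ℝ) (s : ℝ) :
    HasDerivAt (phi τ A) (P τ A s) s := by
  have h1 : HasDerivAt (fun u : ℝ => Real.exp (-u/τ)) (Real.exp (-s/τ) * (-1/τ)) s :=
    ((hasDerivAt_id s).neg.div_const τ).exp
  have h2 : HasDerivAt (fun u : ℝ => exp ((-u) • A))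
      ((-1 : ℝ) • (exp ((-s) • A) * A)) s :=
    HasDerivAt.scomp (x := s) (h := fun u : ℝ => -u)
      (hasDerivAt_exp_smul_const A (-s)) ((hasDerivAt_id s).neg)
  exact h1.smul h2

noncomputable def K2 (τ : ℝ) (A Q C : Matrix (Fin n) (Fin n) ℝ) (s : ℝ) :
    Matrix (Fin n) (Fin n) ℝ :=
  g A s * C + g A s * Fi τ A s * (Q * ((1 - τ • A)⁻¹)ᵀ)

lemma cc_eq (τ : ℝ) (A Q C : Matrix (Fin n) (Fin n) ℝ) :
    coloredCorrelation n τ A Q C = K2 τ A Q C := by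
  funext s
  simp only [coloredCorrelation, K2, g, Fi, phi, mul_assoc]

noncomputable def D1 (τ : ℝ) (A Q C : Matrix (Fin n) (Fin n) ℝ) (s : ℝ) :
    Matrix (Fin n) (Fin n) ℝ :=
  g A s * A * C +
    (g A s * A * Fi τ A s + g A s * phi τ A s) * (Q * ((1 - τ • A)⁻¹)ᵀ)

lemma hasDerivAt_K2 (τ : ℝ) (A Q C : Matrix (Fin n) (Fin n) ℝ) (s : ℝ) :
    HasDerivAt (K2 τ A Q C) (D1 τ A Q C s) s :=
  ((hasDerivAt_g A s).mul_const C).add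
    (((hasDerivAt_g A s).mul (hasDerivAt_Fi τ A s)).mul_const (Q * ((1 - τ • A)⁻¹)ᵀ))

noncomputable def D2 (τ : ℝ) (A Q C : Matrix (Fin n) (Fin n) ℝ) (s : ℝ) :
    Matrix (Fin n) (Fin n) ℝ :=
  g A s * A * A * C +
    ((g A s * A * A * Fi τ A s + g A s * A * phi τ A s) +
      (g A s * A * phi τ A s + g A s * P τ A s)) * (Q * ((1 - τ • A)⁻¹)ᵀ)

lemma hasDerivAt_D1 (τ : ℝ) (A Q C : Matrix (Fin n) (Fin n) ℝ) (s : ℝ) :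
    HasDerivAt (D1 τ A Q C) (D2 τ A Q C s) s :=
  (((hasDerivAt_g A s).mul_const A).mul_const C).add
    (((((hasDerivAt_g A s).mul_const A).mul (hasDerivAt_Fi τ A s)).add
        ((hasDerivAt_g A s).mul (hasDerivAt_phi τ A s))).mul_const
      (Q * ((1 - τ • A)⁻¹)ᵀ))

end ColoredAux

/-- `K_c` is twice differentiable and its derivatives at `0` encode the linear dynamics:
`τ·K_c″(0) + K_c′(0) = A·(τ·K_c′(0) + C)`; consequently, if `τ·K_c′(0) + C` is invertible,
then `A = (τ·K_c″(0) + K_c′(0))·(τ·K_c′(0) + C)⁻¹`. -/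
theorem coloredCorrelation_encodes_dynamics
    (n : ℕ) (τ : ℝ) (hτ : 0 < τ) (A Q C : Matrix (Fin n) (Fin n) ℝ)
    (hinv : IsUnit (1 - τ • A)) :
    Differentiable ℝ (coloredCorrelation n τ A Q C) ∧
    Differentiable ℝ (deriv (coloredCorrelation n τ A Q C)) ∧
    τ • deriv (deriv (coloredCorrelation n τ A Q C)) 0 +
        deriv (coloredCorrelation n τ A Q C) 0 =
      A * (τ • deriv (coloredCorrelation n τ A Q C) 0 + C) ∧
    (IsUnit (τ • deriv (coloredCorrelation n τ A Q C) 0 + C) →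
      A = (τ • deriv (deriv (coloredCorrelation n τ A Q C)) 0 +
            deriv (coloredCorrelation n τ A Q C) 0) *
          (τ • deriv (coloredCorrelation n τ A Q C) 0 + C)⁻¹) := by
  classical
  open ColoredAux in
  have hτ0 : τ ≠ 0 := ne_of_gt hτ
  have hK : ∀ s, HasDerivAt (coloredCorrelation n τ A Q C) (D1 τ A Q C s) s := by
    rw [cc_eq]
    exact hasDerivAt_K2 τ A Q C
  have hd1 : deriv (coloredCorrelation n τ A Q C) = D1 τ A Q C :=
    funext fun s => (hK s).deriv
  have hd2 : deriv (ColoredAux.D1 τ A Q C) = D2 τ A Q C :=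
    funext fun s => (hasDerivAt_D1 τ A Q C s).deriv
  have diff1 : Differentiable ℝ (coloredCorrelation n τ A Q C) :=
    fun s => (hK s).differentiableAt
  have diff2 : Differentiable ℝ (deriv (coloredCorrelation n τ A Q C)) := by
    rw [hd1]; exact fun s => (hasDerivAt_D1 τ A Q C s).differentiableAt
  set E : Matrix (Fin n) (Fin n) ℝ := Q * ((1 - τ • A)⁻¹)ᵀ with hE
  have e1 : D1 τ A Q C 0 = A * C + E := by
    simp [D1, g, Fi, phi, intervalIntegral.integral_same, ← hE]
  have e2 : D2 τ A Q C 0 = A * A * C + (A * E + (A * E + (-A + (-1/τ) • 1) * E)) := by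
    simp [D2, g, Fi, phi, P, intervalIntegral.integral_same, add_mul, ← hE]
  have key : τ • deriv (deriv (coloredCorrelation n τ A Q C)) 0 +
        deriv (coloredCorrelation n τ A Q C) 0 =
      A * (τ • deriv (coloredCorrelation n τ A Q C) 0 + C) := by
    rw [hd1, hd2, e1, e2]
    have hcancel : τ • (((-1/τ : ℝ) • (1 : Matrix (Fin n) (Fin n) ℝ)) * E) = -E := by
      rw [smul_mul_assoc, one_mul, smul_smul]
      field_simp
      simp
    simp only [smul_add, mul_add, add_mul, neg_mul, smul_neg, hcancel,
      mul_smul_comm, mul_assoc]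
    abel
  refine ⟨diff1, diff2, key, fun hU => ?_⟩
  have hdet : IsUnit (τ • deriv (coloredCorrelation n τ A Q C) 0 + C).det :=
    (Matrix.isUnit_iff_isUnit_det _).mp hU
  rw [key, Matrix.mul_nonsing_inv_cancel_right _ _ hdet]
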